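/- Let p = log_4 3. The function f_0(x) = x^p + x^{2p} − (x^2 + x)^p is strictly increasing on (0, ∞), and consequently f_0(x) ≥ 0 for all x ≥ 0. -/

import Mathlib

open Real Set

theorem stmt_5 (p : ℝ) (hp : p = Real.logb 4 3) :
    StrictMonoOn (fun x : ℝ => x ^ p + x ^ (2 * p) - (x ^ 2 + x) ^ p) (Set.Ioi 0) ∧
    ∀ x : ℝ, 0 ≤ x → 0 ≤ x ^ p + x ^ (2 * p) - (x ^ 2 + x) ^ p := by
  have hp0 : 0 < p := by
    rw [hp, Real.logb, div_pos_iff]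
    left
    constructor <;> [exact Real.log_pos (by norm_num); exact Real.log_pos (by norm_num)]
  have hp1 : p < 1 := by
    rw [hp, Real.logb, div_lt_one (Real.log_pos (by norm_num))]
    exact Real.log_lt_log (by norm_num) (by norm_num)
  -- g x = 1 + x^p - (1+x)^p
  set g : ℝ → ℝ := fun x => 1 + x ^ p - (1 + x) ^ p with hg
  have hgderiv : ∀ x : ℝ, 0 < x →
      HasDerivAt g (p * x ^ (p - 1) - p * (1 + x) ^ (p - 1)) x := by
    intro x hx
    have h1 : HasDerivAt (fun x : ℝ => x ^ p) (p * x ^ (p - 1)) x := by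
      have := Real.hasDerivAt_rpow_const (x := x) (p := p) (Or.inl hx.ne')
      simpa [mul_comm] using this
    have h2 : HasDerivAt (fun x : ℝ => (1 + x) ^ p) (p * (1 + x) ^ (p - 1)) x := by
      have h3 : HasDerivAt (fun x : ℝ => 1 + x) 1 x := (hasDerivAt_id x).const_add 1
      have := h3.rpow_const (p := p) (Or.inl (by positivity))
      simpa [mul_comm] using this
    exact ((h1.const_add 1).sub h2)
  have hgcont : ContinuousOn g (Ici 0) := by
    apply ContinuousOn.sub
    · exact continuousOn_const.add (fun x hx =>
        (Real.continuousAt_rpow_const x p (Or.inr hp0.le)).continuousWithinAt)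
    · exact fun x hx => ((continuous_const.add continuous_id).continuousAt.rpow_const
        (Or.inr hp0.le)).continuousWithinAt
  have hgmono : StrictMonoOn g (Ici 0) := by
    apply strictMonoOn_of_hasDerivWithinAt_pos (convex_Ici 0) hgcont
      (f' := fun x => p * x ^ (p - 1) - p * (1 + x) ^ (p - 1))
    · intro x hx
      rw [interior_Ici] at hx
      exact (hgderiv x hx).hasDerivWithinAt
    · intro x hx
      rw [interior_Ici] at hx
      have : (1 + x) ^ (p - 1) < x ^ (p - 1) :=
        Real.rpow_lt_rpow_of_neg hx (by linarith) (by linarith)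
      have := mul_lt_mul_of_pos_left this hp0
      linarith
  have hg0 : g 0 = 0 := by simp [hg, Real.zero_rpow hp0.ne']
  have hgpos : ∀ x : ℝ, 0 < x → 0 < g x := by
    intro x hx
    have := hgmono (self_mem_Ici) (le_of_lt hx : (0:ℝ) ≤ x) hx
    rwa [hg0] at this
  have hfact : ∀ x : ℝ, 0 < x →
      x ^ p + x ^ (2 * p) - (x ^ 2 + x) ^ p = x ^ p * g x := by
    intro x hx
    have h1 : x ^ (2 * p) = x ^ p * x ^ p := by
      rw [← Real.rpow_add hx]; ring_nf
    have h2 : (x ^ 2 + x) ^ p = x ^ p * (1 + x) ^ p := by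
      rw [← Real.mul_rpow hx.le (by positivity)]; ring_nf
    rw [h1, h2, hg]; ring
  constructor
  · intro a ha b hb hab
    simp only [mem_Ioi] at ha hb
    simp only
    rw [hfact a ha, hfact b hb]
    have h1 : a ^ p < b ^ p := Real.rpow_lt_rpow ha.le hab hp0
    have h2 : g a < g b := hgmono ha.le hb.le hab
    exact mul_lt_mul' h1.le h2 (hgpos a ha).le (by positivity)
  · intro x hx
    rcases eq_or_lt_of_le hx with h | h
    · simp [← h, Real.zero_rpow hp0.ne', Real.zero_rpow (by positivity : (2*p) ≠ 0)]
    · rw [hfact x h]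
      exact le_of_lt (mul_pos (Real.rpow_pos_of_pos h p) (hgpos x h))
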